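/- arXiv:1809.06051 — 2 statements merged into one kernel-verified Lean document; each statement's English description precedes it below -/
import Mathlib

section
/- Let (W,ω) be a fusion frame for H and (V,υ) a Bessel fusion sequence. The following are equivalent: (1) (V,υ) is a fusion frame dual of (W,ω); (2) there exists a (V,W)-admissible sequence {Q_i}_{i∈I} such that {υ_iQ_i*}_{i∈I} is an operator-valued Bessel sequence and the operator x ↦ Σ_i υ_iω_iQ_iP_{W_i}x is invertible on H; (3) there exist an operator-valued Bessel sequence L = {L_i}_{i∈I} ⊂ B(H) with Σ_i ω_iL_i*P_{W_i}x = 0 for all x ∈ H, and an invertible operator U ∈ B(H), such that the operators A_i := (ω_i U S_{W,ω}^{-1} + L_i*)P_{W_i} satisfy ran(A_i) ⊆ V_i for all i ∈ I, and ‖A_i‖ = υ_i for all i ∉ I₀(V,W). -/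
noncomputable section

open ContinuousLinearMap

/-- Orthogonal projection onto a closed subspace, as an operator on `H`. -/
def fproj {H : Type*} [NormedAddCommGroup H] [InnerProductSpace ℂ H] [CompleteSpace H]
    (W : Submodule ℂ H) (hW : IsClosed (W : Set H)) : H →L[ℂ] H :=
  haveI : CompleteSpace W := hW.completeSpace_coe
  W.subtypeL.comp (W.orthogonalProjectionOnto)

/-- A `(V,W)`-admissible sequence of operators: `W_i^⊥ ⊆ ker Q_i`, `ran Q_i ⊆ V_i`, and
`‖Q_i‖ = 1` whenever `i ∉ I₀(V,W)`. -/
def Admissible {H : Type*} [NormedAddCommGroup H] [InnerProductSpace ℂ H] [CompleteSpace H]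
    {I : Type*} (V W : I → Submodule ℂ H) (Q : I → H →L[ℂ] H) : Prop :=
  ∀ i, (W i)ᗮ ≤ LinearMap.ker (Q i : H →ₗ[ℂ] H) ∧ LinearMap.range (Q i : H →ₗ[ℂ] H) ≤ V i ∧
    (¬(V i = ⊥ ∨ W i = ⊥) → ‖Q i‖ = 1)

section Helpers

variable {H : Type*} [NormedAddCommGroup H] [InnerProductSpace ℂ H] [CompleteSpace H]

lemma fproj_mem (W : Submodule ℂ H) (hW : IsClosed (W : Set H)) (x : H) : fproj W hW x ∈ W := by
  haveI : CompleteSpace W := hW.completeSpace_coe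
  exact (W.orthogonalProjectionOnto x).2

lemma fproj_of_mem (W : Submodule ℂ H) (hW : IsClosed (W : Set H)) {x : H} (hx : x ∈ W) :
    fproj W hW x = x := by
  haveI : CompleteSpace W := hW.completeSpace_coe
  exact Submodule.starProjection_eq_self_iff.2 hx

lemma fproj_of_orth (W : Submodule ℂ H) (hW : IsClosed (W : Set H)) {x : H} (hx : x ∈ Wᗮ) :
    fproj W hW x = 0 := by
  haveI : CompleteSpace W := hW.completeSpace_coe
  simp [fproj, Submodule.orthogonalProjectionOnto_apply_of_mem_orthogonal hx]

lemma sub_fproj_mem (W : Submodule ℂ H) (hW : IsClosed (W : Set H)) (x : H) :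
    x - fproj W hW x ∈ Wᗮ := by
  haveI : CompleteSpace W := hW.completeSpace_coe
  exact Submodule.sub_starProjection_mem_orthogonal x

lemma fproj_fproj (W : Submodule ℂ H) (hW : IsClosed (W : Set H)) (x : H) :
    fproj W hW (fproj W hW x) = fproj W hW x :=
  fproj_of_mem W hW (fproj_mem W hW x)

lemma norm_fproj_le (W : Submodule ℂ H) (hW : IsClosed (W : Set H)) (x : H) :
    ‖fproj W hW x‖ ≤ ‖x‖ := by
  haveI : CompleteSpace W := hW.completeSpace_coe
  calc ‖fproj W hW x‖ = ‖(W.orthogonalProjectionOnto x : H)‖ := rfl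
  _ ≤ 1 * ‖x‖ := by
      simpa using (W.orthogonalProjectionOnto).le_of_opNorm_le (Submodule.orthogonalProjectionOnto_norm_le W) x
  _ = ‖x‖ := one_mul _

lemma fproj_adjoint (W : Submodule ℂ H) (hW : IsClosed (W : Set H)) :
    adjoint (fproj W hW) = fproj W hW := by
  haveI : CompleteSpace W := hW.completeSpace_coe
  exact (isSelfAdjoint_starProjection W).adjoint_eq

lemma comp_fproj_of_ker {W : Submodule ℂ H} (hW : IsClosed (W : Set H)) {Q : H →L[ℂ] H}
    (hker : Wᗮ ≤ LinearMap.ker (Q : H →ₗ[ℂ] H)) (x : H) : Q (fproj W hW x) = Q x := by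
  have h0 : Q (x - fproj W hW x) = 0 := hker (sub_fproj_mem W hW x)
  rw [map_sub] at h0
  linear_combination (norm := abel) -h0

lemma fproj_comp_of_range {V : Submodule ℂ H} (hV : IsClosed (V : Set H)) {Q : H →L[ℂ] H}
    (hran : LinearMap.range (Q : H →ₗ[ℂ] H) ≤ V) (x : H) : fproj V hV (Q x) = Q x :=
  fproj_of_mem V hV (hran ⟨x, rfl⟩)

lemma eq_zero_of_ker_top {Q : H →L[ℂ] H} (hker : (⊤ : Submodule ℂ H) ≤ LinearMap.ker (Q : H →ₗ[ℂ] H)) :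
    Q = 0 := by
  ext x
  simpa using hker (Submodule.mem_top (x := x))

lemma adjoint_real_smul (r : ℝ) (T : H →L[ℂ] H) : adjoint (r • T) = r • adjoint T := by
  have h : r • T = (r : ℂ) • T := by ext x; simp
  rw [h, map_smulₛₗ]
  simp

/-- The key norm bound for admissible operators. -/
lemma adm_adj_bound {V W : Submodule ℂ H} (hV : IsClosed (V : Set H)) {υ : ℝ}
    (hυ0 : 0 ≤ υ) (hυbot : υ = 0 ↔ V = ⊥) {Q : H →L[ℂ] H}
    (hker : Wᗮ ≤ LinearMap.ker (Q : H →ₗ[ℂ] H)) (hran : LinearMap.range (Q : H →ₗ[ℂ] H) ≤ V)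
    (hnorm : ¬(V = ⊥ ∨ W = ⊥) → ‖Q‖ = 1) (x : H) :
    ‖υ • adjoint Q x‖ ^ 2 ≤ υ ^ 2 * ‖fproj V hV x‖ ^ 2 := by
  by_cases hVb : V = ⊥
  · have : υ = 0 := hυbot.2 hVb
    simp [this]
  by_cases hWb : W = ⊥
  · have hQ0 : Q = 0 := eq_zero_of_ker_top
      (by simpa [hWb, Submodule.bot_orthogonal_eq_top] using hker)
    have : ‖υ • adjoint Q x‖ ^ 2 = 0 := by simp [hQ0]
    rw [this]
    positivity
  · have hQn : ‖Q‖ = 1 := hnorm (by tauto)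
    have hQP : adjoint Q = adjoint Q ∘L fproj V hV := by
      have h1 : fproj V hV ∘L Q = Q := by ext y; exact fproj_comp_of_range hV hran y
      conv_lhs => rw [← h1, adjoint_comp, fproj_adjoint]
    have hb : ‖adjoint Q x‖ ≤ ‖fproj V hV x‖ := by
      conv_lhs => rw [hQP]
      have h2 : ‖adjoint Q (fproj V hV x)‖ ≤ ‖adjoint Q‖ * ‖fproj V hV x‖ := le_opNorm _ _
      rw [adjoint.norm_map, hQn, one_mul] at h2
      exact h2
    have : ‖υ • adjoint Q x‖ = υ * ‖adjoint Q x‖ := by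
      rw [norm_smul, Real.norm_of_nonneg hυ0]
    rw [this, mul_pow]
    have ha2 : ‖adjoint Q x‖ ^ 2 ≤ ‖fproj V hV x‖ ^ 2 := by
      nlinarith [norm_nonneg (adjoint Q x), norm_nonneg (fproj V hV x)]
    exact mul_le_mul_of_nonneg_left ha2 (sq_nonneg υ)

lemma hasSum_le_of_le {I : Type*} {f g : I → ℝ} (h0 : ∀ i, 0 ≤ f i) (hle : ∀ i, f i ≤ g i)
    {s : ℝ} (hg : HasSum g s) : ∃ t, HasSum f t ∧ t ≤ s := by
  have hsf : Summable f := Summable.of_nonneg_of_le h0 hle hg.summable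
  exact ⟨∑' i, f i, hsf.hasSum, hasSum_le hle hsf.hasSum hg⟩

end Helpers

set_option maxHeartbeats 2000000 in
/-- Proposition 2 of the paper: characterizations of fusion frame duals. -/
theorem fusionFrameDual_tfae
    {H : Type*} [NormedAddCommGroup H] [InnerProductSpace ℂ H] [CompleteSpace H]
    [TopologicalSpace.SeparableSpace H]
    {I : Type*} [Countable I]
    (W V : I → Submodule ℂ H)
    (hW : ∀ i, IsClosed ((W i) : Set H)) (hV : ∀ i, IsClosed ((V i) : Set H))
    (ω υ : I → ℝ)
    (hωseq : ∀ i, 0 ≤ ω i ∧ (ω i = 0 ↔ W i = ⊥))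
    (hυseq : ∀ i, 0 ≤ υ i ∧ (υ i = 0 ↔ V i = ⊥))
    -- (W,ω) is a fusion frame
    (αW βW : ℝ) (hαW : 0 < αW)
    (hWframe : ∀ x : H, ∃ s : ℝ,
      HasSum (fun i => ω i ^ 2 * ‖fproj (W i) (hW i) x‖ ^ 2) s ∧
      αW * ‖x‖ ^ 2 ≤ s ∧ s ≤ βW * ‖x‖ ^ 2)
    -- (V,υ) is a Bessel fusion sequence
    (βV : ℝ)
    (hVB : ∀ x : H, ∃ s : ℝ,
      HasSum (fun i => υ i ^ 2 * ‖fproj (V i) (hV i) x‖ ^ 2) s ∧ s ≤ βV * ‖x‖ ^ 2)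
    -- the fusion frame operator S_{W,ω} and its inverse
    (S Sinv : H →L[ℂ] H)
    (hS : ∀ x : H, HasSum (fun i => (ω i ^ 2) • fproj (W i) (hW i) x) (S x))
    (hSinv : S ∘L Sinv = 1 ∧ Sinv ∘L S = 1) :
    -- (1) (V,υ) is a fusion frame dual of (W,ω)
    ((∃ Q : I → H →L[ℂ] H, Admissible V W Q ∧
        ∃ M : H →L[ℂ] H,
          (∀ x : H, HasSum
            (fun i => (υ i * ω i) • fproj (V i) (hV i) ((Q i) (fproj (W i) (hW i) x))) (M x)) ∧
          ∃ N : H →L[ℂ] H, M ∘L N = 1 ∧ N ∘L M = 1) ↔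
    -- (2) there is an admissible sequence Q with {υ_i Q_i*} an operator-valued Bessel sequence
    --     and x ↦ Σ_i υ_i ω_i Q_i P_{W_i} x invertible
      (∃ Q : I → H →L[ℂ] H, Admissible V W Q ∧
        (∃ βQ : ℝ, ∀ x : H, ∃ s : ℝ,
          HasSum (fun i => ‖υ i • (ContinuousLinearMap.adjoint (Q i)) x‖ ^ 2) s ∧
          s ≤ βQ * ‖x‖ ^ 2) ∧
        ∃ M : H →L[ℂ] H,
          (∀ x : H, HasSum (fun i => (υ i * ω i) • (Q i) (fproj (W i) (hW i) x)) (M x)) ∧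
          ∃ N : H →L[ℂ] H, M ∘L N = 1 ∧ N ∘L M = 1)) ∧
    -- (1) ↔ (3)
    ((∃ Q : I → H →L[ℂ] H, Admissible V W Q ∧
        ∃ M : H →L[ℂ] H,
          (∀ x : H, HasSum
            (fun i => (υ i * ω i) • fproj (V i) (hV i) ((Q i) (fproj (W i) (hW i) x))) (M x)) ∧
          ∃ N : H →L[ℂ] H, M ∘L N = 1 ∧ N ∘L M = 1) ↔
      (∃ L : I → H →L[ℂ] H,
        (∃ βL : ℝ, ∀ x : H, ∃ s : ℝ,
          HasSum (fun i => ‖L i x‖ ^ 2) s ∧ s ≤ βL * ‖x‖ ^ 2) ∧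
        (∀ x : H, HasSum
          (fun i => ω i • (ContinuousLinearMap.adjoint (L i)) (fproj (W i) (hW i) x)) (0 : H)) ∧
        ∃ U : H →L[ℂ] H, (∃ Uinv : H →L[ℂ] H, U ∘L Uinv = 1 ∧ Uinv ∘L U = 1) ∧
          (∀ i, LinearMap.range
              ((((ω i • (U ∘L Sinv)) + ContinuousLinearMap.adjoint (L i)) ∘L fproj (W i) (hW i) :
                H →ₗ[ℂ] H))
            ≤ V i) ∧
          (∀ i, ¬(V i = ⊥ ∨ W i = ⊥) →
            ‖((ω i • (U ∘L Sinv)) + ContinuousLinearMap.adjoint (L i)) ∘L fproj (W i) (hW i)‖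
              = υ i))) := by
  obtain ⟨hS1, hS2⟩ := hSinv
  constructor
  · -- (1) ↔ (2)
    constructor
    · rintro ⟨Q, hQ, M, hM, N, hN⟩
      refine ⟨Q, hQ, ⟨max βV 0, fun x => ?_⟩, M, fun x => ?_, N, hN⟩
      · obtain ⟨s, hs, hsle⟩ := hVB x
        obtain ⟨t, ht, htle⟩ := hasSum_le_of_le (fun i => sq_nonneg _)
          (fun i => adm_adj_bound (hV i) (hυseq i).1 (hυseq i).2 (hQ i).1 (hQ i).2.1
            (hQ i).2.2 x) hs
        refine ⟨t, ht, htle.trans (hsle.trans ?_)⟩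
        exact mul_le_mul_of_nonneg_right (le_max_left βV 0) (sq_nonneg _)
      · have he : (fun i => (υ i * ω i) • fproj (V i) (hV i) ((Q i) (fproj (W i) (hW i) x)))
            = fun i => (υ i * ω i) • (Q i) (fproj (W i) (hW i) x) := by
          funext i; rw [fproj_comp_of_range (hV i) (hQ i).2.1]
        rw [← he]; exact hM x
    · rintro ⟨Q, hQ, -, M, hM, N, hN⟩
      refine ⟨Q, hQ, M, fun x => ?_, N, hN⟩
      have he : (fun i => (υ i * ω i) • fproj (V i) (hV i) ((Q i) (fproj (W i) (hW i) x)))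
          = fun i => (υ i * ω i) • (Q i) (fproj (W i) (hW i) x) := by
        funext i; rw [fproj_comp_of_range (hV i) (hQ i).2.1]
      rw [he]; exact hM x
  · -- (1) ↔ (3)
    constructor
    · rintro ⟨Q, hQ, M, hM, N, hN1, hN2⟩
      set MS := M ∘L Sinv with hMS
      set C : I → H →L[ℂ] H := fun i => (υ i • Q i - ω i • MS) ∘L fproj (W i) (hW i) with hC
      have hM' : ∀ x : H, HasSum (fun i => (υ i * ω i) • (Q i) (fproj (W i) (hW i) x)) (M x) := by
        intro x
        have he : (fun i => (υ i * ω i) • fproj (V i) (hV i) ((Q i) (fproj (W i) (hW i) x)))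
            = fun i => (υ i * ω i) • (Q i) (fproj (W i) (hW i) x) := by
          funext i; rw [fproj_comp_of_range (hV i) (hQ i).2.1]
        rw [← he]; exact hM x
      have hA : ∀ i, ((ω i • MS) + ContinuousLinearMap.adjoint
          (ContinuousLinearMap.adjoint (C i))) ∘L fproj (W i) (hW i) = υ i • Q i := by
        intro i
        rw [adjoint_adjoint]
        ext x
        have h1 : C i (fproj (W i) (hW i) x)
            = υ i • Q i x - ω i • MS (fproj (W i) (hW i) x) := by
          simp only [hC, coe_comp', Function.comp_apply, sub_apply, smul_apply, fproj_fproj]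
          rw [comp_fproj_of_ker (hW i) (hQ i).1]
        show (ω i • MS) (fproj (W i) (hW i) x) + C i (fproj (W i) (hW i) x) = υ i • Q i x
        rw [h1, smul_apply]
        abel
      refine ⟨fun i => ContinuousLinearMap.adjoint (C i),
        ⟨2 * max βV 0 + 2 * max βW 0 * ‖ContinuousLinearMap.adjoint MS‖ ^ 2, fun x => ?_⟩,
        fun x => ?_, M, ⟨N, hN1, hN2⟩, fun i => ?_, fun i hi => ?_⟩
      · -- Bessel bound for L
        set y := ContinuousLinearMap.adjoint MS x with hy
        obtain ⟨s1, hs1, hs1le⟩ := hVB x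
        obtain ⟨s2, hs2, -, hs2le⟩ := hWframe y
        have hsum : HasSum (fun i => 2 * (υ i ^ 2 * ‖fproj (V i) (hV i) x‖ ^ 2)
            + 2 * (ω i ^ 2 * ‖fproj (W i) (hW i) y‖ ^ 2)) (2 * s1 + 2 * s2) :=
          (hs1.mul_left 2).add (hs2.mul_left 2)
        have hterm : ∀ i, ‖ContinuousLinearMap.adjoint (C i) x‖ ^ 2
            ≤ 2 * (υ i ^ 2 * ‖fproj (V i) (hV i) x‖ ^ 2)
              + 2 * (ω i ^ 2 * ‖fproj (W i) (hW i) y‖ ^ 2) := by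
          intro i
          have hCad : ContinuousLinearMap.adjoint (C i) x
              = fproj (W i) (hW i) (υ i • ContinuousLinearMap.adjoint (Q i) x)
                - ω i • fproj (W i) (hW i) y := by
            rw [hC]
            simp only
            rw [adjoint_comp, fproj_adjoint, map_sub, adjoint_real_smul, adjoint_real_smul]
            simp [map_sub, hy]
          have hb1 : ‖fproj (W i) (hW i) (υ i • ContinuousLinearMap.adjoint (Q i) x)‖
              ≤ ‖υ i • ContinuousLinearMap.adjoint (Q i) x‖ := norm_fproj_le _ _ _
          have hb2 : ‖υ i • ContinuousLinearMap.adjoint (Q i) x‖ ^ 2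
              ≤ υ i ^ 2 * ‖fproj (V i) (hV i) x‖ ^ 2 :=
            adm_adj_bound (hV i) (hυseq i).1 (hυseq i).2 (hQ i).1 (hQ i).2.1 (hQ i).2.2 x
          have hb3 : ‖ω i • fproj (W i) (hW i) y‖ = ω i * ‖fproj (W i) (hW i) y‖ := by
            rw [norm_smul, Real.norm_of_nonneg (hωseq i).1]
          have hb4 : ‖ContinuousLinearMap.adjoint (C i) x‖
              ≤ ‖υ i • ContinuousLinearMap.adjoint (Q i) x‖ + ω i * ‖fproj (W i) (hW i) y‖ := by
            rw [hCad]
            refine (norm_sub_le _ _).trans ?_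
            rw [hb3]
            exact add_le_add_left hb1 _
          have hb5 : ‖ContinuousLinearMap.adjoint (C i) x‖ ^ 2
              ≤ (‖υ i • ContinuousLinearMap.adjoint (Q i) x‖
                  + ω i * ‖fproj (W i) (hW i) y‖) ^ 2 :=
            pow_le_pow_left₀ (norm_nonneg _) hb4 2
          nlinarith [hb2, hb5, sq_nonneg (‖υ i • ContinuousLinearMap.adjoint (Q i) x‖
            - ω i * ‖fproj (W i) (hW i) y‖)]
        obtain ⟨t, ht, htle⟩ := hasSum_le_of_le (fun i => sq_nonneg _) hterm hsum
        refine ⟨t, ht, ?_⟩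
        have hy_le : ‖y‖ ≤ ‖ContinuousLinearMap.adjoint MS‖ * ‖x‖ := le_opNorm _ _
        have h1 : s1 ≤ max βV 0 * ‖x‖ ^ 2 :=
          hs1le.trans (mul_le_mul_of_nonneg_right (le_max_left βV 0) (sq_nonneg _))
        have h2 : s2 ≤ max βW 0 * ‖y‖ ^ 2 :=
          hs2le.trans (mul_le_mul_of_nonneg_right (le_max_left βW 0) (sq_nonneg _))
        have h3 : ‖y‖ ^ 2 ≤ ‖ContinuousLinearMap.adjoint MS‖ ^ 2 * ‖x‖ ^ 2 := by
          rw [← mul_pow]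
          exact pow_le_pow_left₀ (norm_nonneg _) hy_le 2
        have h4 : (0:ℝ) ≤ max βW 0 := le_max_right βW 0
        nlinarith [mul_le_mul_of_nonneg_left h3 h4]
      · -- zero sum condition
        have h1 := hM' x
        have h2 : HasSum (fun i => (ω i ^ 2) • MS (fproj (W i) (hW i) x)) (M x) := by
          have h2a := (hS x).mapL MS
          have h2b : (fun i => MS ((ω i ^ 2) • fproj (W i) (hW i) x))
              = fun i => (ω i ^ 2) • MS (fproj (W i) (hW i) x) := by
            funext i; exact MS.map_smul_of_tower _ _
          rw [h2b] at h2a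
          have h2c : MS (S x) = M x := by
            rw [hMS]
            show M (Sinv (S x)) = M x
            have := DFunLike.congr_fun hS2 x
            simp only [coe_comp', Function.comp_apply, one_apply] at this
            rw [this]
            rfl
          rwa [h2c] at h2a
        have h3 := h1.sub h2
        rw [sub_self] at h3
        have he : (fun i => ω i • ContinuousLinearMap.adjoint
              (ContinuousLinearMap.adjoint (C i)) (fproj (W i) (hW i) x))
            = fun i => (υ i * ω i) • (Q i) (fproj (W i) (hW i) x)
              - (ω i ^ 2) • MS (fproj (W i) (hW i) x) := by
          funext i
          rw [adjoint_adjoint, hC]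
          simp only [coe_comp', Function.comp_apply, sub_apply, smul_apply, fproj_fproj]
          rw [smul_sub, smul_smul, smul_smul, mul_comm (ω i) (υ i), ← pow_two]
        rw [he]
        exact h3
      · -- range condition
        rw [hA i]
        rintro x ⟨z, rfl⟩
        exact (V i).smul_of_tower_mem (υ i) ((hQ i).2.1 ⟨z, rfl⟩)
      · -- norm condition
        rw [hA i, norm_smul, Real.norm_of_nonneg (hυseq i).1, (hQ i).2.2 hi, mul_one]
    · rintro ⟨L, -, hLzero, U, ⟨Uinv, hU1, hU2⟩, hrange, hnorm⟩
      set A : I → H →L[ℂ] H := fun i =>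
        ((ω i • (U ∘L Sinv)) + ContinuousLinearMap.adjoint (L i)) ∘L fproj (W i) (hW i) with hA
      refine ⟨fun i => if h : υ i = 0 then 0 else (υ i)⁻¹ • A i, fun i => ?_, U,
        fun x => ?_, Uinv, hU1, hU2⟩
      · by_cases hυ : υ i = 0
        · refine ⟨?_, ?_, ?_⟩
          · intro x hx; simp [dif_pos hυ]
          · rintro x ⟨z, rfl⟩; simp [dif_pos hυ]
          · intro hcon
            exact absurd (Or.inl ((hυseq i).2.1 hυ)) hcon
        · refine ⟨?_, ?_, ?_⟩
          · intro x hx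
            have hx0 : fproj (W i) (hW i) x = 0 := fproj_of_orth _ _ hx
            have hAx : A i x = 0 := by
              rw [hA]; simp only [coe_comp', Function.comp_apply, hx0, map_zero]
            simp [dif_neg hυ, hAx]
          · rintro x ⟨z, rfl⟩
            simp only [dif_neg hυ, smul_apply]
            exact (V i).smul_of_tower_mem _ (hrange i ⟨z, rfl⟩)
          · intro hcon
            have hυpos : 0 < υ i := lt_of_le_of_ne (hυseq i).1 (Ne.symm hυ)
            beta_reduce
            rw [dif_neg hυ, norm_smul, Real.norm_of_nonneg (le_of_lt (inv_pos.2 hυpos)),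
              hA, hnorm i hcon]
            field_simp
      · have key : ∀ i, (υ i * ω i) • fproj (V i) (hV i)
            ((if h : υ i = 0 then 0 else (υ i)⁻¹ • A i) (fproj (W i) (hW i) x))
            = ω i • A i x := by
          intro i
          by_cases hυ : υ i = 0
          · have hVb : V i = ⊥ := (hυseq i).2.1 hυ
            have hAx : A i x = 0 := by
              have := hrange i ⟨x, rfl⟩
              rwa [hVb, Submodule.mem_bot] at this
            simp [dif_pos hυ, hAx]
          · have hAP : A i (fproj (W i) (hW i) x) = A i x := by
              rw [hA]
              simp only [coe_comp', Function.comp_apply, fproj_fproj]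
            have hmem : A i x ∈ V i := hrange i ⟨x, rfl⟩
            rw [dif_neg hυ]
            simp only [smul_apply, hAP]
            have hmem2 : (υ i)⁻¹ • A i x ∈ V i := (V i).smul_of_tower_mem _ hmem
            rw [fproj_of_mem (V i) (hV i) hmem2, smul_smul]
            congr 1
            field_simp
        have hfun : (fun i => (υ i * ω i) • fproj (V i) (hV i)
              ((if h : υ i = 0 then 0 else (υ i)⁻¹ • A i) (fproj (W i) (hW i) x)))
            = fun i => ω i • A i x := funext key
        rw [hfun]
        have h1 : HasSum (fun i => (ω i ^ 2) • (U ∘L Sinv) (fproj (W i) (hW i) x)) (U x) := by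
          have h1a := (hS x).mapL (U ∘L Sinv)
          have h1b : (fun i => (U ∘L Sinv) ((ω i ^ 2) • fproj (W i) (hW i) x))
              = fun i => (ω i ^ 2) • (U ∘L Sinv) (fproj (W i) (hW i) x) := by
            funext i; exact (U ∘L Sinv).map_smul_of_tower _ _
          rw [h1b] at h1a
          have h1c : (U ∘L Sinv) (S x) = U x := by
            show U (Sinv (S x)) = U x
            have := DFunLike.congr_fun hS2 x
            simp only [coe_comp', Function.comp_apply, one_apply] at this
            rw [this]
            rfl
          rwa [h1c] at h1a
        have h2 := hLzero x
        have h3 := h1.add h2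
        rw [add_zero] at h3
        have he : (fun i => ω i • A i x)
            = fun i => (ω i ^ 2) • (U ∘L Sinv) (fproj (W i) (hW i) x)
              + ω i • ContinuousLinearMap.adjoint (L i) (fproj (W i) (hW i) x) := by
          funext i
          rw [hA]
          simp only [coe_comp', Function.comp_apply, add_apply, smul_apply]
          rw [smul_add, smul_smul, ← pow_two]
        rw [he]
        exact h3
end
end

section
/- Let m ∈ c₀(I) (i.e. for every ε > 0 there is a finite set J ⊆ I with |m_i| < ε for all i ∉ J) and let R ∈ ℓ∞(I,B(H)) be such that every R_i has finite rank and sup_{i∈I} rank(R_i) < ∞. Then the diagonal operator D_{mR} : 𝔥 → 𝔥 is compact; in particular, for any Bessel fusion sequences (W,ω) and (V,υ) the Bessel fusion multiplier M_{mR,V,W} is a compact operator on H. -/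
noncomputable section

open ContinuousLinearMap
open scoped ENNReal InnerProductSpace

section AuxCompact
variable {E F : Type*} [NormedAddCommGroup E] [NormedSpace ℂ E]
  [NormedAddCommGroup F] [NormedSpace ℂ F]

lemma myCompact_of_finrank (f : E →L[ℂ] F)
    (h : FiniteDimensional ℂ ↥(LinearMap.range (f : E →ₗ[ℂ] F))) :
    IsCompactOperator ⇑f := by
  haveI := h
  refine ⟨Subtype.val '' (Metric.closedBall
      (0 : ↥(LinearMap.range (f : E →ₗ[ℂ] F))) ‖f‖), ?_, ?_⟩
  · exact (isCompact_closedBall _ _).image continuous_subtype_val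
  · refine Filter.mem_of_superset (Metric.closedBall_mem_nhds 0 one_pos) ?_
    intro y hy
    refine ⟨⟨f y, LinearMap.mem_range_self _ y⟩, ?_, rfl⟩
    simp only [Metric.mem_closedBall, dist_zero_right] at hy ⊢
    calc (‖f y‖ : ℝ) ≤ ‖f‖ * ‖y‖ := f.le_opNorm y
      _ ≤ ‖f‖ * 1 := by gcongr
      _ = ‖f‖ := mul_one _

lemma myCompact_sum {ι : Type*} (s : Finset ι) (f : ι → E →L[ℂ] F)
    (h : ∀ i ∈ s, IsCompactOperator ⇑(f i)) :
    IsCompactOperator ⇑(∑ i ∈ s, f i) := by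
  classical
  induction s using Finset.induction with
  | empty => simpa using (isCompactOperator_zero : IsCompactOperator (0 : E → F))
  | @insert a s ha ih =>
    rw [Finset.sum_insert ha]
    have h1 : IsCompactOperator ⇑(f a) := h a (Finset.mem_insert_self a s)
    have h2 : IsCompactOperator ⇑(∑ i ∈ s, f i) :=
      ih fun i hi => h i (Finset.mem_insert_of_mem hi)
    have := h1.add h2
    rwa [show ⇑(f a) + ⇑(∑ i ∈ s, f i) = ⇑(f a + ∑ i ∈ s, f i) from rfl] at this

end AuxCompact

section AuxLp
variable {H : Type*} [NormedAddCommGroup H] [InnerProductSpace ℂ H] [CompleteSpace H]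
  {I : Type*} [DecidableEq I]

def lpSingleCLM (i : I) : H →L[ℂ] lp (fun _ : I => H) 2 :=
  LinearMap.mkContinuous
    { toFun := fun a => lp.single 2 i a
      map_add' := fun a b => by
        apply lp.ext
        funext j
        rcases eq_or_ne j i with rfl | hj
        · simp [lp.single_apply_self]
        · simp [lp.single_apply_ne 2 i _ hj]
      map_smul' := fun c a => by
        exact lp.single_smul (E := fun _ : I => H) 2 i c a }
    1 (fun a => by
      have := lp.norm_single (p := 2) (E := fun _ : I => H) (by norm_num)
        i a
      rw [one_mul]; exact this.le)

def lpProjCLM (i : I) : lp (fun _ : I => H) 2 →L[ℂ] H :=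
  LinearMap.mkContinuous
    { toFun := fun x => x i
      map_add' := fun x y => rfl
      map_smul' := fun c x => rfl }
    1 (fun x => by
      rw [one_mul]; exact lp.norm_apply_le_norm (E := fun _ : I => H) (by norm_num) x i)

lemma my_lp_norm_le {x y : lp (fun _ : I => H) 2} {c : ℝ} (hc : 0 ≤ c)
    (h : ∀ i, ‖y i‖ ≤ c * ‖x i‖) : ‖y‖ ≤ c * ‖x‖ := by
  have htp : 0 < (2 : ℝ≥0∞).toReal := by norm_num
  have h2 : (2 : ℝ≥0∞).toReal = 2 := by norm_num
  refine lp.norm_le_of_forall_sum_le htp (mul_nonneg hc (norm_nonneg _)) fun s => ?_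
  rw [h2]
  have h1 : ∀ i ∈ s, ‖y i‖ ^ (2:ℝ) ≤ c ^ (2:ℝ) * ‖x i‖ ^ (2:ℝ) := by
    intro i _
    rw [← Real.mul_rpow hc (norm_nonneg _)]
    exact Real.rpow_le_rpow (norm_nonneg _) (h i) (by norm_num)
  calc ∑ i ∈ s, ‖y i‖ ^ (2:ℝ) ≤ ∑ i ∈ s, c ^ (2:ℝ) * ‖x i‖ ^ (2:ℝ) :=
        Finset.sum_le_sum h1
    _ = c ^ (2:ℝ) * ∑ i ∈ s, ‖x i‖ ^ (2:ℝ) := by rw [Finset.mul_sum]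
    _ ≤ c ^ (2:ℝ) * ‖x‖ ^ (2:ℝ) := by
        have := lp.sum_rpow_le_norm_rpow htp x s
        rw [h2] at this
        exact mul_le_mul_of_nonneg_left this (Real.rpow_nonneg hc 2)
    _ = (c * ‖x‖) ^ (2:ℝ) := (Real.mul_rpow hc (norm_nonneg _)).symm

end AuxLp

lemma myPart1 {H : Type*} [NormedAddCommGroup H] [InnerProductSpace ℂ H] [CompleteSpace H]
    {I : Type*} [DecidableEq I]
    (m : I → ℂ)
    (hm : ∀ ε : ℝ, 0 < ε → ∃ F : Finset I, ∀ i ∉ F, ‖m i‖ < ε)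
    (R : I → H →L[ℂ] H) (C' : ℝ) (hC0 : 0 ≤ C') (hC : ∀ i, ‖R i‖ ≤ C')
    (hfin : ∀ i, FiniteDimensional ℂ ↥(LinearMap.range (R i : H →ₗ[ℂ] H)))
    (D : lp (fun _ : I => H) 2 →L[ℂ] lp (fun _ : I => H) 2)
    (hD : ∀ (x : lp (fun _ : I => H) 2) (i : I), D x i = m i • (R i) (x i)) :
    IsCompactOperator ⇑D := by
  set T : I → (lp (fun _ : I => H) 2 →L[ℂ] lp (fun _ : I => H) 2) := fun i =>
    m i • ((lpSingleCLM i).comp ((R i).comp (lpProjCLM i))) with hT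
  -- each T i is compact
  have hTc : ∀ i, IsCompactOperator ⇑(T i) := by
    intro i
    have hB : IsCompactOperator
        ⇑((lpSingleCLM (H := H) i).comp ((R i).comp (lpProjCLM i))) := by
      apply myCompact_of_finrank
      haveI := hfin i
      have hle : LinearMap.range
          (((lpSingleCLM (H := H) i).comp ((R i).comp (lpProjCLM i))) :
            lp (fun _ : I => H) 2 →ₗ[ℂ] lp (fun _ : I => H) 2)
          ≤ (LinearMap.range (R i : H →ₗ[ℂ] H)).map (lpSingleCLM (H := H) i : H →ₗ[ℂ] _) := by
        rintro _ ⟨x, rfl⟩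
        exact ⟨R i (lpProjCLM i x), LinearMap.mem_range_self _ _, rfl⟩
      exact Submodule.finiteDimensional_of_le hle
    have := hB.smul (m i)
    rwa [show (m i • ⇑((lpSingleCLM (H := H) i).comp ((R i).comp (lpProjCLM i))))
        = ⇑(T i) from rfl] at this
  -- coordinates of the partial sums
  have hcoord : ∀ (F : Finset I) (x : lp (fun _ : I => H) 2) (j : I),
      ((∑ i ∈ F, T i) x) j = if j ∈ F then m j • R j (x j) else 0 := by
    intro F x j
    rw [ContinuousLinearMap.sum_apply]
    have hc : (↑(∑ i ∈ F, T i x) : ∀ _ : I, H) j = ∑ i ∈ F, (T i x) j := by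
      rw [lp.coeFn_sum, Finset.sum_apply]
    rw [hc]
    have happ : ∀ i : I, (T i x) j
        = m i • ((lp.single 2 i (R i (x i)) : lp (fun _ : I => H) 2) j) := by
      intro i
      have : T i x = m i • (lp.single 2 i (R i (x i)) : lp (fun _ : I => H) 2) := rfl
      rw [this, lp.coeFn_smul, Pi.smul_apply]
    by_cases hj : j ∈ F
    · rw [Finset.sum_eq_single_of_mem j hj]
      · rw [happ, lp.single_apply_self, if_pos hj]
      · intro i hi hij
        rw [happ, lp.single_apply_ne 2 i _ (Ne.symm hij), smul_zero]
    · rw [if_neg hj, Finset.sum_eq_zero]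
      intro i hi
      have hij : j ≠ i := fun h => hj (h ▸ hi)
      rw [happ, lp.single_apply_ne 2 i _ hij, smul_zero]
  -- operator-norm bound on the tails
  have key : ∀ δ : ℝ, 0 ≤ δ → ∀ F : Finset I, (∀ i ∉ F, ‖m i‖ ≤ δ) →
      ‖(∑ i ∈ F, T i) - D‖ ≤ δ * C' := by
    intro δ hδ F hF
    refine opNorm_le_bound _ (mul_nonneg hδ hC0) fun x => ?_
    rw [show ((∑ i ∈ F, T i) - D) x = (∑ i ∈ F, T i) x - D x from rfl]
    refine my_lp_norm_le (mul_nonneg hδ hC0) fun j => ?_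
    have hsub : (↑((∑ i ∈ F, T i) x - D x) : ∀ _ : I, H) j
        = ((∑ i ∈ F, T i) x) j - (D x) j := by
      rw [lp.coeFn_sub, Pi.sub_apply]
    rw [hsub, hcoord F x j, hD x j]
    by_cases hj : j ∈ F
    · rw [if_pos hj, sub_self, norm_zero]
      positivity
    · rw [if_neg hj, zero_sub, norm_neg, norm_smul]
      calc ‖m j‖ * ‖R j (x j)‖ ≤ δ * (C' * ‖x j‖) := by
            have h1 : ‖R j (x j)‖ ≤ C' * ‖x j‖ :=
              ((R j).le_opNorm (x j)).trans
                (mul_le_mul_of_nonneg_right (hC j) (norm_nonneg _))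
            exact mul_le_mul (hF j hj) h1 (norm_nonneg _) hδ
        _ = δ * C' * ‖x j‖ := by ring
  -- conclude by taking limits
  refine isCompactOperator_of_tendsto (l := (Filter.atTop : Filter (Finset I)))
    (F := fun F => ∑ i ∈ F, T i) ?_
    (Filter.Eventually.of_forall fun F => myCompact_sum F T fun i _ => hTc i)
  rw [Metric.tendsto_atTop]
  intro ε hε
  have hden : (0:ℝ) < 2 * (C' + 1) := by nlinarith
  set δ := ε / (2 * (C' + 1)) with hδdef
  have hδ : 0 < δ := div_pos hε hden
  obtain ⟨F₀, hF₀⟩ := hm δ hδ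
  refine ⟨F₀, fun F hFF => ?_⟩
  have hb := key δ hδ.le F fun i hi => (hF₀ i fun h => hi (hFF h)).le
  have heq : δ * (2 * (C' + 1)) = ε := div_mul_cancel₀ ε hden.ne'
  calc dist (∑ i ∈ F, T i) D = ‖(∑ i ∈ F, T i) - D‖ := dist_eq_norm _ _
    _ ≤ δ * C' := hb
    _ < ε := by nlinarith

lemma my_fproj_inner {H : Type*} [NormedAddCommGroup H] [InnerProductSpace ℂ H]
    [CompleteSpace H] (U : Submodule ℂ H) (hU : IsClosed (U : Set H)) (a b : H) :
    ⟪fproj U hU a, b⟫_ℂ = ⟪a, fproj U hU b⟫_ℂ := by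
  haveI : CompleteSpace U := hU.completeSpace_coe
  exact Submodule.inner_starProjection_left_eq_right U a b

/-- the key tail estimate -/
lemma myKeyEst {H : Type*} [NormedAddCommGroup H] [InnerProductSpace ℂ H] [CompleteSpace H]
    {I : Type*}
    (m : I → ℂ) (R : I → H →L[ℂ] H) (C' : ℝ) (hC0 : 0 ≤ C') (hC : ∀ i, ‖R i‖ ≤ C')
    (W V : I → Submodule ℂ H)
    (hW : ∀ i, IsClosed ((W i) : Set H)) (hV : ∀ i, IsClosed ((V i) : Set H))
    (ω υ : I → ℝ) (hω : ∀ i, 0 ≤ ω i) (hυ : ∀ i, 0 ≤ υ i)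
    (βW' βV' : ℝ) (hβW0 : 0 ≤ βW') (hβV0 : 0 ≤ βV')
    (hBW : ∀ (x : H) (G : Finset I),
      ∑ i ∈ G, (ω i * ‖fproj (W i) (hW i) x‖) ^ 2 ≤ βW' * ‖x‖ ^ 2)
    (hBV : ∀ (x : H) (G : Finset I),
      ∑ i ∈ G, (υ i * ‖fproj (V i) (hV i) x‖) ^ 2 ≤ βV' * ‖x‖ ^ 2)
    (δ : ℝ) (hδ : 0 ≤ δ) (x : H) (G : Finset I) (hG : ∀ i ∈ G, ‖m i‖ ≤ δ) :
    ‖∑ i ∈ G, m i • (υ i * ω i) • fproj (V i) (hV i) ((R i) (fproj (W i) (hW i) x))‖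
      ≤ δ * (C' * (Real.sqrt βW' * Real.sqrt βV')) * ‖x‖ := by
  classical
  set t : I → H := fun i =>
    m i • (υ i * ω i) • fproj (V i) (hV i) ((R i) (fproj (W i) (hW i) x)) with ht
  set z : H := ∑ i ∈ G, t i with hz
  have hK0 : 0 ≤ δ * (C' * (Real.sqrt βW' * Real.sqrt βV')) * ‖x‖ := by positivity
  rcases eq_or_ne z 0 with h0 | h0
  · rw [h0, norm_zero]; exact hK0
  have hterm : ∀ i ∈ G, RCLike.re (⟪t i, z⟫_ℂ)
      ≤ δ * C' * ((ω i * ‖fproj (W i) (hW i) x‖) * (υ i * ‖fproj (V i) (hV i) z‖)) := by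
    intro i hi
    have h1 : RCLike.re (⟪t i, z⟫_ℂ) ≤ ‖⟪t i, z⟫_ℂ‖ := RCLike.re_le_norm _
    have h2 : ‖⟪t i, z⟫_ℂ‖
        = ‖m i‖ * ((υ i * ω i) *
            ‖⟪fproj (V i) (hV i) ((R i) (fproj (W i) (hW i) x)), z⟫_ℂ‖) := by
      rw [ht]
      simp only
      rw [inner_smul_left, RCLike.real_smul_eq_coe_smul (K := ℂ), inner_smul_left]
      rw [norm_mul, norm_mul]
      congr 1
      · simp
      congr 1
      · rw [RCLike.norm_conj]
        rw [RCLike.norm_ofReal, abs_of_nonneg (mul_nonneg (hυ i) (hω i))]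
    have h3 : ‖⟪fproj (V i) (hV i) ((R i) (fproj (W i) (hW i) x)), z⟫_ℂ‖
        ≤ (C' * ‖fproj (W i) (hW i) x‖) * ‖fproj (V i) (hV i) z‖ := by
      rw [my_fproj_inner]
      refine (norm_inner_le_norm _ _).trans ?_
      refine mul_le_mul_of_nonneg_right ?_ (norm_nonneg _)
      exact ((R i).le_opNorm _).trans
        (mul_le_mul_of_nonneg_right (hC i) (norm_nonneg _))
    calc RCLike.re (⟪t i, z⟫_ℂ) ≤ ‖⟪t i, z⟫_ℂ‖ := h1
      _ = ‖m i‖ * ((υ i * ω i) *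
            ‖⟪fproj (V i) (hV i) ((R i) (fproj (W i) (hW i) x)), z⟫_ℂ‖) := h2
      _ ≤ δ * ((υ i * ω i) * ((C' * ‖fproj (W i) (hW i) x‖) * ‖fproj (V i) (hV i) z‖)) := by
          refine mul_le_mul (hG i hi) ?_
            (mul_nonneg (mul_nonneg (hυ i) (hω i)) (norm_nonneg _)) hδ
          exact mul_le_mul_of_nonneg_left h3 (mul_nonneg (hυ i) (hω i))
      _ = δ * C' * ((ω i * ‖fproj (W i) (hW i) x‖) * (υ i * ‖fproj (V i) (hV i) z‖)) := by
          ring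
  have hCS : ∑ i ∈ G, (ω i * ‖fproj (W i) (hW i) x‖) * (υ i * ‖fproj (V i) (hV i) z‖)
      ≤ (Real.sqrt βW' * ‖x‖) * (Real.sqrt βV' * ‖z‖) := by
    set a : I → ℝ := fun i => ω i * ‖fproj (W i) (hW i) x‖
    set b : I → ℝ := fun i => υ i * ‖fproj (V i) (hV i) z‖
    have hab : (0:ℝ) ≤ ∑ i ∈ G, a i * b i :=
      Finset.sum_nonneg fun i _ =>
        mul_nonneg (mul_nonneg (hω i) (norm_nonneg _)) (mul_nonneg (hυ i) (norm_nonneg _))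
    have hsq : (∑ i ∈ G, a i * b i) ^ 2 ≤ (βW' * ‖x‖ ^ 2) * (βV' * ‖z‖ ^ 2) := by
      refine (Finset.sum_mul_sq_le_sq_mul_sq G a b).trans ?_
      exact mul_le_mul (hBW x G) (hBV z G)
        (Finset.sum_nonneg fun i _ => sq_nonneg _) (by positivity)
    have := Real.sqrt_le_sqrt hsq
    rw [Real.sqrt_sq hab] at this
    refine this.trans ?_
    rw [Real.sqrt_mul (by positivity), Real.sqrt_mul hβW0, Real.sqrt_mul hβV0,
      Real.sqrt_sq (norm_nonneg x), Real.sqrt_sq (norm_nonneg z)]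
  have hz2 : ‖z‖ ^ 2 ≤ (δ * (C' * (Real.sqrt βW' * Real.sqrt βV')) * ‖x‖) * ‖z‖ := by
    have e1 : ‖z‖ ^ 2 = RCLike.re (⟪z, z⟫_ℂ) := (inner_self_eq_norm_sq z).symm
    have e2 : (⟪z, z⟫_ℂ) = ∑ i ∈ G, ⟪t i, z⟫_ℂ := by rw [hz, sum_inner]
    calc ‖z‖ ^ 2 = RCLike.re (⟪z, z⟫_ℂ) := e1
      _ = ∑ i ∈ G, RCLike.re (⟪t i, z⟫_ℂ) := by rw [e2, map_sum]
      _ ≤ ∑ i ∈ G, δ * C' *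
          ((ω i * ‖fproj (W i) (hW i) x‖) * (υ i * ‖fproj (V i) (hV i) z‖)) :=
          Finset.sum_le_sum hterm
      _ = δ * C' * ∑ i ∈ G,
          (ω i * ‖fproj (W i) (hW i) x‖) * (υ i * ‖fproj (V i) (hV i) z‖) := by
          rw [Finset.mul_sum]
      _ ≤ δ * C' * ((Real.sqrt βW' * ‖x‖) * (Real.sqrt βV' * ‖z‖)) :=
          mul_le_mul_of_nonneg_left hCS (by positivity)
      _ = (δ * (C' * (Real.sqrt βW' * Real.sqrt βV')) * ‖x‖) * ‖z‖ := by ring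
  have hzpos : 0 < ‖z‖ := norm_pos_iff.mpr h0
  have := hz2
  rw [pow_two] at this
  exact le_of_mul_le_mul_right this hzpos

lemma myPart2 {H : Type*} [NormedAddCommGroup H] [InnerProductSpace ℂ H] [CompleteSpace H]
    {I : Type*}
    (m : I → ℂ)
    (hm : ∀ ε : ℝ, 0 < ε → ∃ F : Finset I, ∀ i ∉ F, ‖m i‖ < ε)
    (R : I → H →L[ℂ] H) (C' : ℝ) (hC0 : 0 ≤ C') (hC : ∀ i, ‖R i‖ ≤ C')
    (hfin : ∀ i, FiniteDimensional ℂ ↥(LinearMap.range (R i : H →ₗ[ℂ] H)))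
    (W V : I → Submodule ℂ H)
    (hW : ∀ i, IsClosed ((W i) : Set H)) (hV : ∀ i, IsClosed ((V i) : Set H))
    (ω υ : I → ℝ) (hω : ∀ i, 0 ≤ ω i) (hυ : ∀ i, 0 ≤ υ i)
    (βW : ℝ) (hβW : ∀ x : H, ∃ s : ℝ,
      HasSum (fun i => ω i ^ 2 * ‖fproj (W i) (hW i) x‖ ^ 2) s ∧ s ≤ βW * ‖x‖ ^ 2)
    (βV : ℝ) (hβV : ∀ x : H, ∃ s : ℝ,
      HasSum (fun i => υ i ^ 2 * ‖fproj (V i) (hV i) x‖ ^ 2) s ∧ s ≤ βV * ‖x‖ ^ 2)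
    (M : H →L[ℂ] H)
    (hM : ∀ x : H, HasSum
      (fun i => m i • (υ i * ω i) • fproj (V i) (hV i) ((R i) (fproj (W i) (hW i) x)))
      (M x)) :
    IsCompactOperator ⇑M := by
  classical
  set βW' : ℝ := max βW 0 with hβW'
  set βV' : ℝ := max βV 0 with hβV'
  have hβW0 : 0 ≤ βW' := le_max_right _ _
  have hβV0 : 0 ≤ βV' := le_max_right _ _
  have hBW : ∀ (x : H) (G : Finset I),
      ∑ i ∈ G, (ω i * ‖fproj (W i) (hW i) x‖) ^ 2 ≤ βW' * ‖x‖ ^ 2 := by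
    intro x G
    obtain ⟨s, hs, hsle⟩ := hβW x
    have h1 : ∑ i ∈ G, ω i ^ 2 * ‖fproj (W i) (hW i) x‖ ^ 2 ≤ s :=
      sum_le_hasSum G (fun i _ => by positivity) hs
    have h2 : s ≤ βW' * ‖x‖ ^ 2 :=
      hsle.trans (mul_le_mul_of_nonneg_right (le_max_left _ _) (sq_nonneg _))
    calc ∑ i ∈ G, (ω i * ‖fproj (W i) (hW i) x‖) ^ 2
        = ∑ i ∈ G, ω i ^ 2 * ‖fproj (W i) (hW i) x‖ ^ 2 := by
          refine Finset.sum_congr rfl fun i _ => ?_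
          rw [mul_pow]
      _ ≤ s := h1
      _ ≤ βW' * ‖x‖ ^ 2 := h2
  have hBV : ∀ (x : H) (G : Finset I),
      ∑ i ∈ G, (υ i * ‖fproj (V i) (hV i) x‖) ^ 2 ≤ βV' * ‖x‖ ^ 2 := by
    intro x G
    obtain ⟨s, hs, hsle⟩ := hβV x
    have h1 : ∑ i ∈ G, υ i ^ 2 * ‖fproj (V i) (hV i) x‖ ^ 2 ≤ s :=
      sum_le_hasSum G (fun i _ => by positivity) hs
    have h2 : s ≤ βV' * ‖x‖ ^ 2 :=
      hsle.trans (mul_le_mul_of_nonneg_right (le_max_left _ _) (sq_nonneg _))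
    calc ∑ i ∈ G, (υ i * ‖fproj (V i) (hV i) x‖) ^ 2
        = ∑ i ∈ G, υ i ^ 2 * ‖fproj (V i) (hV i) x‖ ^ 2 := by
          refine Finset.sum_congr rfl fun i _ => ?_
          rw [mul_pow]
      _ ≤ s := h1
      _ ≤ βV' * ‖x‖ ^ 2 := h2
  set t : H → I → H := fun x i =>
    m i • (υ i * ω i) • fproj (V i) (hV i) ((R i) (fproj (W i) (hW i) x)) with htdef
  set S : I → H →L[ℂ] H := fun i =>
    m i • ((υ i * ω i) •
      ((fproj (V i) (hV i)).comp ((R i).comp (fproj (W i) (hW i))))) with hSdef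
  have hSapp : ∀ (i : I) (x : H), S i x = t x i := fun i x => rfl
  -- each S i is compact
  have hSc : ∀ i, IsCompactOperator ⇑(S i) := by
    intro i
    have hB : IsCompactOperator
        ⇑((fproj (V i) (hV i)).comp ((R i).comp (fproj (W i) (hW i)))) := by
      apply myCompact_of_finrank
      haveI := hfin i
      have hle : LinearMap.range
          (((fproj (V i) (hV i)).comp ((R i).comp (fproj (W i) (hW i)))) : H →ₗ[ℂ] H)
          ≤ (LinearMap.range (R i : H →ₗ[ℂ] H)).map (fproj (V i) (hV i) : H →ₗ[ℂ] H) := by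
        rintro _ ⟨x, rfl⟩
        exact ⟨R i (fproj (W i) (hW i) x), LinearMap.mem_range_self _ _, rfl⟩
      exact Submodule.finiteDimensional_of_le hle
    have h1 := hB.smul (υ i * ω i)
    have h2 := h1.smul (m i)
    rwa [show (m i • (υ i * ω i) •
        ⇑((fproj (V i) (hV i)).comp ((R i).comp (fproj (W i) (hW i)))))
        = ⇑(S i) from rfl] at h2
  set B0 : ℝ := C' * (Real.sqrt βW' * Real.sqrt βV') with hB0def
  have hB00 : 0 ≤ B0 := by positivity
  -- tail bound for the partial sums
  have key : ∀ δ : ℝ, 0 ≤ δ → ∀ F : Finset I, (∀ i ∉ F, ‖m i‖ ≤ δ) →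
      ‖(∑ i ∈ F, S i) - M‖ ≤ δ * B0 := by
    intro δ hδ F hF
    refine opNorm_le_bound _ (mul_nonneg hδ hB00) fun x => ?_
    have hsum : (∑ i ∈ F, S i) x = ∑ i ∈ F, t x i := by
      rw [ContinuousLinearMap.sum_apply]
      exact Finset.sum_congr rfl fun i _ => hSapp i x
    have h1 : HasSum (fun i => if i ∈ F then t x i else 0) (∑ i ∈ F, t x i) := by
      have := hasSum_sum_of_ne_finset_zero
        (s := F) (f := fun i => if i ∈ F then t x i else 0) (L := SummationFilter.unconditional I) (fun i hi => if_neg hi)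
      rwa [Finset.sum_congr rfl fun i hi => if_pos hi] at this
    have h2 : HasSum (fun i => t x i - (if i ∈ F then t x i else 0))
        (M x - ∑ i ∈ F, t x i) := (hM x).sub h1
    have hbound : ∀ s : Finset I,
        ‖∑ i ∈ s, (t x i - (if i ∈ F then t x i else 0))‖ ≤ δ * B0 * ‖x‖ := by
      intro s
      have hrw : ∑ i ∈ s, (t x i - (if i ∈ F then t x i else 0))
          = ∑ i ∈ s.filter (fun i => i ∉ F), t x i := by
        rw [Finset.sum_filter]
        refine Finset.sum_congr rfl fun i _ => ?_
        by_cases hi : i ∈ F <;> simp [hi]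
      rw [hrw]
      have := myKeyEst m R C' hC0 hC W V hW hV ω υ hω hυ βW' βV' hβW0 hβV0
        hBW hBV δ hδ x (s.filter (fun i => i ∉ F))
        (fun i hi => hF i (Finset.mem_filter.mp hi).2)
      calc ‖∑ i ∈ s.filter (fun i => i ∉ F), t x i‖
          ≤ δ * (C' * (Real.sqrt βW' * Real.sqrt βV')) * ‖x‖ := this
        _ = δ * B0 * ‖x‖ := by rw [hB0def]
    have htail : ‖M x - ∑ i ∈ F, t x i‖ ≤ δ * B0 * ‖x‖ :=
      le_of_tendsto h2.norm (Filter.Eventually.of_forall hbound)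
    calc ‖((∑ i ∈ F, S i) - M) x‖ = ‖(∑ i ∈ F, S i) x - M x‖ := rfl
      _ = ‖M x - (∑ i ∈ F, S i) x‖ := norm_sub_rev _ _
      _ = ‖M x - ∑ i ∈ F, t x i‖ := by rw [hsum]
      _ ≤ δ * B0 * ‖x‖ := htail
  -- conclude by taking limits
  refine isCompactOperator_of_tendsto (l := (Filter.atTop : Filter (Finset I)))
    (F := fun F => ∑ i ∈ F, S i) ?_
    (Filter.Eventually.of_forall fun F => myCompact_sum F S fun i _ => hSc i)
  rw [Metric.tendsto_atTop]
  intro ε hε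
  have hden : (0:ℝ) < 2 * (B0 + 1) := by nlinarith
  set δ := ε / (2 * (B0 + 1)) with hδdef
  have hδ : 0 < δ := div_pos hε hden
  obtain ⟨F₀, hF₀⟩ := hm δ hδ
  refine ⟨F₀, fun F hFF => ?_⟩
  have hb := key δ hδ.le F fun i hi => (hF₀ i fun h => hi (hFF h)).le
  have heq : δ * (2 * (B0 + 1)) = ε := div_mul_cancel₀ ε hden.ne'
  calc dist (∑ i ∈ F, S i) M = ‖(∑ i ∈ F, S i) - M‖ := dist_eq_norm _ _
    _ ≤ δ * B0 := hb
    _ < ε := by nlinarith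

/-- if `m ∈ c₀(I)` and `R ∈ ℓ∞(I,B(H))` consists of finite-rank operators of
uniformly bounded rank, then `D_{mR}` is compact and every `(m,R)`-Bessel fusion multiplier
`M_{mR,V,W}` is compact. -/
theorem multiplier_compact_of_c0_symbol
    {H : Type*} [NormedAddCommGroup H] [InnerProductSpace ℂ H] [CompleteSpace H]
    [TopologicalSpace.SeparableSpace H]
    {I : Type*} [Countable I]
    (m : I → ℂ)
    (hm : ∀ ε : ℝ, 0 < ε → ∃ F : Finset I, ∀ i ∉ F, ‖m i‖ < ε)
    (R : I → H →L[ℂ] H) (hR : BddAbove (Set.range fun i => ‖R i‖))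
    (hfin : ∀ i, FiniteDimensional ℂ ↥(LinearMap.range (R i : H →ₗ[ℂ] H)))
    (n : ℕ) (hrank : ∀ i, Module.finrank ℂ ↥(LinearMap.range (R i : H →ₗ[ℂ] H)) ≤ n)
    -- the diagonal operator D_{mR}
    (D : lp (fun _ : I => H) 2 →L[ℂ] lp (fun _ : I => H) 2)
    (hD : ∀ (x : lp (fun _ : I => H) 2) (i : I), D x i = m i • (R i) (x i)) :
    IsCompactOperator ⇑D ∧
    -- and every (m,R)-Bessel fusion multiplier is compact
    (∀ (W V : I → Submodule ℂ H)
      (hW : ∀ i, IsClosed ((W i) : Set H)) (hV : ∀ i, IsClosed ((V i) : Set H))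
      (ω υ : I → ℝ),
      (∀ i, 0 ≤ ω i ∧ (ω i = 0 ↔ W i = ⊥)) →
      (∀ i, 0 ≤ υ i ∧ (υ i = 0 ↔ V i = ⊥)) →
      (∃ βW : ℝ, ∀ x : H, ∃ s : ℝ,
        HasSum (fun i => ω i ^ 2 * ‖fproj (W i) (hW i) x‖ ^ 2) s ∧ s ≤ βW * ‖x‖ ^ 2) →
      (∃ βV : ℝ, ∀ x : H, ∃ s : ℝ,
        HasSum (fun i => υ i ^ 2 * ‖fproj (V i) (hV i) x‖ ^ 2) s ∧ s ≤ βV * ‖x‖ ^ 2) →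
      ∀ M : H →L[ℂ] H,
        (∀ x : H, HasSum
          (fun i => m i • (υ i * ω i) • fproj (V i) (hV i) ((R i) (fproj (W i) (hW i) x)))
          (M x)) →
        IsCompactOperator ⇑M) := by
  classical
  obtain ⟨C, hCub⟩ := hR
  set C' : ℝ := max C 0 with hC'def
  have hC0 : 0 ≤ C' := le_max_right _ _
  have hC : ∀ i, ‖R i‖ ≤ C' :=
    fun i => (hCub (Set.mem_range_self i)).trans (le_max_left _ _)
  constructor
  · exact myPart1 m hm R C' hC0 hC hfin D hD
  · intro W V hW hV ω υ hω hυ hBW hBV M hM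
    obtain ⟨βW, hβW⟩ := hBW
    obtain ⟨βV, hβV⟩ := hBV
    exact myPart2 m hm R C' hC0 hC hfin W V hW hV ω υ
      (fun i => (hω i).1) (fun i => (hυ i).1) βW hβW βV hβV M hM
end
end
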